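/- For a single Gaussian electron probe activated at location r_i at time t_i for duration τ_i, the diffusion distribution φ_i(r, t) attains its maximum over all r ∈ ℝ² and t ≥ t_i at r = r_i, t = t_i + τ_i, where it equals A_max := (Q0/(4πD))·ln(1 + 2τ_i D/Ds); that is, φ_i(r, t) ≤ φ_i(r_i, t) ≤ φ_i(r_i, t_i + τ_i) = (Q0/(4πD))·ln(1 + 2ρ⁻¹τ_i) with ρ = Ds/D. -/

import Mathlib

open Real MeasureTheory

attribute [local instance] Classical.propDecidable

/-- The exponential integral of order one. -/
noncomputable def E1 (v : ℝ) : ℝ := ∫ u in Set.Ioi v, u⁻¹ * Real.exp (-u)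

/-- Diffusion distribution of a single Gaussian electron probe activated at
location `ri` at time `ti` for a duration `τ`. -/
noncomputable def phiProbe (Q0 D Ds ti τ : ℝ) (ri : EuclideanSpace ℝ (Fin 2))
    (r : EuclideanSpace ℝ (Fin 2)) (t : ℝ) : ℝ :=
  if t ≤ ti + τ then
    (if r = ri then
      (Q0 / (4 * Real.pi * D)) * Real.log ((Ds + 2 * D * (t - ti)) / Ds)
    else
      (Q0 / (4 * Real.pi * D)) *
        (E1 (‖r - ri‖ ^ 2 / (2 * Ds + 4 * D * (t - ti)))
          - E1 (‖r - ri‖ ^ 2 / (2 * Ds))))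
  else
    (if r = ri then
      (Q0 / (4 * Real.pi * D)) *
        Real.log ((Ds + 2 * D * (t - ti)) / (Ds + 2 * D * (t - ti - τ)))
    else
      (Q0 / (4 * Real.pi * D)) *
        (E1 (‖r - ri‖ ^ 2 / (2 * Ds + 4 * D * (t - ti)))
          - E1 (‖r - ri‖ ^ 2 / (2 * Ds + 4 * D * (t - ti - τ)))))

lemma E1_integrableOn {a : ℝ} (ha : 0 < a) :
    MeasureTheory.IntegrableOn (fun u => u⁻¹ * Real.exp (-u)) (Set.Ioi a) := by
  have h1 : MeasureTheory.IntegrableOn (fun u => a⁻¹ * Real.exp (-1 * u)) (Set.Ioi a) :=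
    (exp_neg_integrableOn_Ioi a one_pos).const_mul _
  refine MeasureTheory.Integrable.mono h1 ?_ ?_
  · exact (measurable_inv.mul (Real.measurable_exp.comp measurable_neg)).aestronglyMeasurable
  · filter_upwards [MeasureTheory.ae_restrict_mem measurableSet_Ioi] with u hu
    have hu' : a < u := hu
    have hu0 : 0 < u := ha.trans hu'
    have he : (0:ℝ) < Real.exp (-u) := Real.exp_pos _
    rw [Real.norm_eq_abs, Real.norm_eq_abs, abs_of_nonneg (by positivity),
      abs_of_nonneg (by positivity : (0:ℝ) ≤ a⁻¹ * Real.exp (-1 * u))]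
    have : u⁻¹ ≤ a⁻¹ := inv_anti₀ ha hu'.le
    calc u⁻¹ * Real.exp (-u) ≤ a⁻¹ * Real.exp (-u) := by nlinarith
      _ = a⁻¹ * Real.exp (-1 * u) := by ring_nf

lemma E1_sub_le_log {v w : ℝ} (hv : 0 < v) (hvw : v ≤ w) :
    E1 v - E1 w ≤ Real.log (w / v) := by
  have hw : 0 < w := hv.trans_le hvw
  have hIoc : MeasureTheory.IntegrableOn (fun u => u⁻¹ * Real.exp (-u)) (Set.Ioc v w) :=
    (E1_integrableOn hv).mono_set Set.Ioc_subset_Ioi_self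
  have hinv : MeasureTheory.IntegrableOn (fun u : ℝ => u⁻¹) (Set.Ioc v w) := by
    have hcont : ContinuousOn (fun u : ℝ => u⁻¹) (Set.Icc v w) := by
      apply ContinuousOn.inv₀ continuousOn_id
      intro x hx; exact ne_of_gt (lt_of_lt_of_le hv hx.1)
    exact (hcont.integrableOn_Icc).mono_set Set.Ioc_subset_Icc_self
  have hsplit : E1 v = (∫ u in Set.Ioc v w, u⁻¹ * Real.exp (-u)) + E1 w := by
    rw [E1, E1, ← MeasureTheory.setIntegral_union (Set.Ioc_disjoint_Ioi le_rfl)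
      measurableSet_Ioi hIoc (E1_integrableOn hw), Set.Ioc_union_Ioi_eq_Ioi hvw]
  have hmono : (∫ u in Set.Ioc v w, u⁻¹ * Real.exp (-u)) ≤ ∫ u in Set.Ioc v w, u⁻¹ := by
    refine MeasureTheory.setIntegral_mono_on hIoc hinv measurableSet_Ioc ?_
    intro u hu
    have hu0 : 0 < u := hv.trans hu.1
    have : Real.exp (-u) ≤ 1 := Real.exp_le_one_iff.mpr (by linarith)
    nlinarith [inv_pos.mpr hu0, Real.exp_pos (-u)]
  have hlog : (∫ u in Set.Ioc v w, (u:ℝ)⁻¹) = Real.log (w / v) := by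
    rw [← intervalIntegral.integral_of_le hvw, integral_inv_of_pos hv hw]
  linarith [hsplit, hmono, hlog.le, hlog.ge]

theorem max_beam_diffusion_distribution (Q0 D Ds ti τ : ℝ)
    (ri : EuclideanSpace ℝ (Fin 2))
    (hQ : 0 < Q0) (hD : 0 < D) (hDs : 0 < Ds) (hτ : 0 < τ) :
    ∀ (r : EuclideanSpace ℝ (Fin 2)) (t : ℝ), ti ≤ t →
      phiProbe Q0 D Ds ti τ ri r t ≤ phiProbe Q0 D Ds ti τ ri ri t ∧
      phiProbe Q0 D Ds ti τ ri ri t ≤ phiProbe Q0 D Ds ti τ ri ri (ti + τ) ∧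
      phiProbe Q0 D Ds ti τ ri ri (ti + τ)
        = (Q0 / (4 * Real.pi * D)) * Real.log (1 + 2 * (Ds / D)⁻¹ * τ) := by
  intro r t ht
  have hπ : 0 < Real.pi := Real.pi_pos
  have hC : 0 < Q0 / (4 * Real.pi * D) := by positivity
  have htt : 0 ≤ t - ti := by linarith
  refine ⟨?_, ?_, ?_⟩
  · -- spatial maximum
    by_cases hr : r = ri
    · rw [hr]
    · have hx : 0 < ‖r - ri‖ ^ 2 := by
        exact pow_pos (norm_pos_iff.mpr (sub_ne_zero.mpr hr)) 2
      set x := ‖r - ri‖ ^ 2 with hxdef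
      by_cases hle : t ≤ ti + τ
      · simp only [phiProbe, if_pos hle, if_neg hr, if_pos rfl]
        apply mul_le_mul_of_nonneg_left _ hC.le
        have hb : 0 < 2 * Ds + 4 * D * (t - ti) := by nlinarith
        have ha : 0 < 2 * Ds := by linarith
        have hv : 0 < x / (2 * Ds + 4 * D * (t - ti)) := div_pos hx hb
        have hvw : x / (2 * Ds + 4 * D * (t - ti)) ≤ x / (2 * Ds) := by
          apply div_le_div_of_nonneg_left hx.le ha; nlinarith
        have key := E1_sub_le_log hv hvw
        have harg : (x / (2 * Ds)) / (x / (2 * Ds + 4 * D * (t - ti)))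
            = (Ds + 2 * D * (t - ti)) / Ds := by
          field_simp
          ring
        rwa [harg] at key
      · simp only [phiProbe, if_neg hle, if_neg hr, if_pos rfl]
        apply mul_le_mul_of_nonneg_left _ hC.le
        have htτ : 0 < t - ti - τ := by push_neg at hle; linarith
        have hb : 0 < 2 * Ds + 4 * D * (t - ti) := by nlinarith
        have ha : 0 < 2 * Ds + 4 * D * (t - ti - τ) := by nlinarith
        have hv : 0 < x / (2 * Ds + 4 * D * (t - ti)) := div_pos hx hb
        have hvw : x / (2 * Ds + 4 * D * (t - ti))
            ≤ x / (2 * Ds + 4 * D * (t - ti - τ)) := by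
          apply div_le_div_of_nonneg_left hx.le ha; nlinarith
        have key := E1_sub_le_log hv hvw
        have harg : (x / (2 * Ds + 4 * D * (t - ti - τ))) / (x / (2 * Ds + 4 * D * (t - ti)))
            = (Ds + 2 * D * (t - ti)) / (Ds + 2 * D * (t - ti - τ)) := by
          field_simp
          ring
        rwa [harg] at key
  · -- temporal maximum
    have hRHS : phiProbe Q0 D Ds ti τ ri ri (ti + τ)
        = (Q0 / (4 * Real.pi * D)) * Real.log ((Ds + 2 * D * τ) / Ds) := by
      simp only [phiProbe, le_refl, if_true, ite_true, if_pos rfl]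
      have h : ti + τ - ti = τ := by ring
      rw [h]
    rw [hRHS]
    by_cases hle : t ≤ ti + τ
    · simp only [phiProbe, if_pos hle, if_pos rfl]
      apply mul_le_mul_of_nonneg_left _ hC.le
      apply Real.log_le_log (by positivity)
      gcongr
      nlinarith
    · simp only [phiProbe, if_neg hle, if_pos rfl]
      apply mul_le_mul_of_nonneg_left _ hC.le
      push_neg at hle
      have htτ : 0 < t - ti - τ := by linarith
      have ha : 0 < Ds + 2 * D * (t - ti - τ) := by nlinarith
      have hb : 0 < Ds + 2 * D * (t - ti) := by nlinarith
      apply Real.log_le_log (by positivity)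
      rw [div_le_div_iff₀ ha hDs]
      nlinarith [mul_nonneg (mul_nonneg (mul_nonneg hD.le hD.le) hτ.le) htτ.le]
  · simp only [phiProbe, le_refl, if_true, ite_true, if_pos rfl]
    rw [show (Ds + 2 * D * (ti + τ - ti)) / Ds = 1 + 2 * (Ds / D)⁻¹ * τ from by
      field_simp
      ring]
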